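/- Let H be a complex Hilbert space with inner product ⟪·,·⟫ conjugate-linear in the first argument, let S be a bounded linear operator on H with adjoint S†, let w ∈ ℂ, and let k₀, k_w ∈ H satisfy S† k₀ = 0 and S† k_w = conj(w) • k_w. Then the vector v := ‖k_w‖² • k₀ − ⟪k_w, k₀⟫ • k_w satisfies ⟪v, Sⁿ v⟫ = 0 for every n ≥ 1; in particular, if v ≠ 0 it is S-inner. -/

import Mathlib

open scoped ComplexInnerProductSpace

/-- If `S† k₀ = 0` and `S† k_w = conj(w) • k_w`, then
`v = ‖k_w‖² • k₀ − ⟪k_w, k₀⟫ • k_w` satisfies `⟪v, Sⁿ v⟫ = 0` for all `n ≥ 1`;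
in particular, if `v ≠ 0` it is `S`-inner.  (In an RKHS, `k₀` and `k_w` are the
reproducing kernels at `0` and `w` and `S` is the shift.) -/
theorem stmt4 {H : Type*} [NormedAddCommGroup H] [InnerProductSpace ℂ H] [CompleteSpace H]
    (S : H →L[ℂ] H) (w : ℂ) (k₀ kw : H)
    (h₀ : ContinuousLinearMap.adjoint S k₀ = 0)
    (hw : ContinuousLinearMap.adjoint S kw = (starRingEnd ℂ w) • kw) :
    ∀ n : ℕ, 1 ≤ n →
      ⟪((‖kw‖ : ℂ) ^ 2 • k₀ - ⟪kw, k₀⟫ • kw), (S ^ n) ((‖kw‖ : ℂ) ^ 2 • k₀ - ⟪kw, k₀⟫ • kw)⟫ = 0 := by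
  set v : H := (‖kw‖ : ℂ) ^ 2 • k₀ - ⟪kw, k₀⟫ • kw with hv
  have hkwv : ⟪kw, v⟫ = 0 := by
    rw [hv, inner_sub_right, inner_smul_right, inner_smul_right, inner_self_eq_norm_sq_to_K]
    rw [mul_comm]; exact sub_self _
  have hadj : ContinuousLinearMap.adjoint S v = (-(starRingEnd ℂ w * ⟪kw, k₀⟫)) • kw := by
    rw [hv, map_sub, map_smul, map_smul, h₀, hw, smul_smul]
    rw [mul_comm]
    simp [neg_smul]
  have hSiter : ∀ m : ℕ, ⟪kw, (S ^ m) v⟫ = 0 := by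
    intro m
    induction m with
    | zero => simpa using hkwv
    | succ m ih =>
      have hstep : (S ^ (m + 1)) v = S ((S ^ m) v) := by
        rw [pow_succ']; rfl
      rw [hstep, ← ContinuousLinearMap.adjoint_inner_left, hw, inner_smul_left]
      simp only [ih, mul_zero]
  intro n hn
  obtain ⟨m, rfl⟩ := Nat.exists_eq_add_of_le hn
  have hstep : (S ^ (1 + m)) v = S ((S ^ m) v) := by
    rw [add_comm, pow_succ']; rfl
  rw [hstep, ← ContinuousLinearMap.adjoint_inner_left, hadj, inner_smul_left]
  simp only [hSiter m, mul_zero]
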